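/- Let d ≥ 3, γ ∈ (−2, 0], and f ≥ 0 with ∫ f dv = 1 and ∫ f|v|² dv = d. Then there is C = C(d, γ, mass, second moment) such that for every cube Q with side length r ≤ 1 and center v₀, the average of h_{f,γ}(v) = c(d,γ)∫ f(w)|v−w|^γ dw over Q satisfies (1/|Q|)∫_Q h_{f,γ} dv ≤ C·⟨v₀⟩^γ·|Q|^{γ/d}. -/

import Mathlib

open MeasureTheory Metric

/-- The axis-parallel cube in `ℝ^d` with center `v₀` and side length `ℓ`. -/
def axisCube (d : ℕ) (v₀ : EuclideanSpace ℝ (Fin d)) (ℓ : ℝ) :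
    Set (EuclideanSpace ℝ (Fin d)) :=
  {v | ∀ i, |v i - v₀ i| ≤ ℓ / 2}

section Aux

open Real Set
open scoped ENNReal

variable {d : ℕ}

lemma coord_abs_le_norm (x : EuclideanSpace ℝ (Fin d)) (i : Fin d) : |x i| ≤ ‖x‖ := by
  rw [EuclideanSpace.norm_eq]
  have h1 : |x i| = Real.sqrt (‖x i‖ ^ 2) := by
    rw [Real.sqrt_sq_eq_abs, Real.norm_eq_abs, abs_abs]
  rw [h1]
  apply Real.sqrt_le_sqrt
  exact Finset.single_le_sum (f := fun j => ‖x j‖ ^ 2)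
    (fun j _ => by positivity) (Finset.mem_univ i)

lemma axisCube_subset_closedBall (v₀ : EuclideanSpace ℝ (Fin d)) {r : ℝ} (hr : 0 ≤ r) :
    axisCube d v₀ r ⊆ closedBall v₀ (Real.sqrt d * r / 2) := by
  intro v hv
  rw [mem_closedBall, dist_eq_norm, EuclideanSpace.norm_eq]
  have key : ∑ i, ‖(v - v₀) i‖ ^ 2 ≤ (d : ℝ) * (r / 2) ^ 2 := by
    calc ∑ i, ‖(v - v₀) i‖ ^ 2 ≤ ∑ _i : Fin d, (r / 2) ^ 2 := by
          apply Finset.sum_le_sum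
          intro i _
          have hvi : |v i - v₀ i| ≤ r / 2 := hv i
          have h2 : ‖(v - v₀) i‖ = |v i - v₀ i| := by
            simp [PiLp.sub_apply, Real.norm_eq_abs]
          rw [h2]
          have h0 : (0:ℝ) ≤ |v i - v₀ i| := abs_nonneg _
          nlinarith
      _ = (d : ℝ) * (r / 2) ^ 2 := by simp [Finset.sum_const, mul_comm]
  calc Real.sqrt (∑ i, ‖(v - v₀) i‖ ^ 2) ≤ Real.sqrt ((d : ℝ) * (r / 2) ^ 2) :=
        Real.sqrt_le_sqrt key
    _ = Real.sqrt d * (r / 2) := by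
        rw [Real.sqrt_mul (by positivity), Real.sqrt_sq (by positivity)]
    _ = Real.sqrt d * r / 2 := by ring

lemma closedBall_subset_axisCube (v₀ : EuclideanSpace ℝ (Fin d)) {r : ℝ} :
    closedBall v₀ (r / 2) ⊆ axisCube d v₀ r := by
  intro v hv i
  rw [mem_closedBall, dist_eq_norm] at hv
  have h1 := coord_abs_le_norm (v - v₀) i
  have h2 : (v - v₀) i = v i - v₀ i := by simp [PiLp.sub_apply]
  rw [h2] at h1
  linarith

lemma measurableSet_axisCube (v₀ : EuclideanSpace ℝ (Fin d)) (r : ℝ) :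
    MeasurableSet (axisCube d v₀ r) := by
  have h : axisCube d v₀ r = ⋂ i, {v : EuclideanSpace ℝ (Fin d) | |v i - v₀ i| ≤ r / 2} := by
    ext v; simp [axisCube, Set.mem_iInter]
  rw [h]
  apply MeasurableSet.iInter
  intro i
  have hc : Continuous fun v : EuclideanSpace ℝ (Fin d) => |v i - v₀ i| := by
    have h3 : Continuous fun v : EuclideanSpace ℝ (Fin d) => v i :=
      (EuclideanSpace.proj i : EuclideanSpace ℝ (Fin d) →L[ℝ] ℝ).continuous
    exact (h3.sub continuous_const).abs
  exact (isClosed_le hc continuous_const).measurableSet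

lemma lintegral_ball_translate (w : EuclideanSpace ℝ (Fin d)) (γ R : ℝ) :
    ∫⁻ v in ball w R, ENNReal.ofReal (‖v - w‖ ^ γ)
      = ∫⁻ x in ball (0 : EuclideanSpace ℝ (Fin d)) R, ENNReal.ofReal (‖x‖ ^ γ) := by
  rw [← lintegral_indicator measurableSet_ball, ← lintegral_indicator measurableSet_ball]
  have h : ∀ v, (ball w R).indicator (fun v => ENNReal.ofReal (‖v - w‖ ^ γ)) v
      = (ball (0 : EuclideanSpace ℝ (Fin d)) R).indicator
          (fun x => ENNReal.ofReal (‖x‖ ^ γ)) (v - w) := by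
    intro v
    by_cases hv : v ∈ ball w R
    · rw [Set.indicator_of_mem hv,
        Set.indicator_of_mem (by simpa [mem_ball, dist_eq_norm] using hv)]
    · rw [Set.indicator_of_notMem hv,
        Set.indicator_of_notMem (by simpa [mem_ball, dist_eq_norm] using hv)]
  simp_rw [h]
  exact lintegral_sub_right_eq_self _ w

/-- Dyadic-annuli bound for the integral of `‖x‖ ^ γ` over a ball. -/
lemma lintegral_ball_rpow_le (hd : 3 ≤ d) {γ : ℝ} (hγ₁ : -2 < γ) (hγ₂ : γ ≤ 0) :
    ∃ K : ℝ, 0 < K ∧ ∀ R : ℝ, 0 < R →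
      ∫⁻ x in ball (0 : EuclideanSpace ℝ (Fin d)) R, ENNReal.ofReal (‖x‖ ^ γ) ≤
        ENNReal.ofReal (K * R ^ ((d : ℝ) + γ)) := by
  haveI : NeZero d := ⟨by omega⟩
  have hd3 : (3 : ℝ) ≤ d := by exact_mod_cast hd
  have hdγ : 0 < (d : ℝ) + γ := by linarith
  set q : ℝ := (2 : ℝ) ^ (-((d : ℝ) + γ)) with hq_def
  have hq_pos : 0 < q := Real.rpow_pos_of_pos two_pos _
  have hq_lt : q < 1 := Real.rpow_lt_one_of_one_lt_of_neg one_lt_two (by linarith)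
  set cB : ℝ≥0∞ := volume (ball (0 : EuclideanSpace ℝ (Fin d)) 1) with hcB_def
  have hcB_lt : cB < ⊤ := measure_ball_lt_top
  have hcB_pos : 0 < cB := measure_ball_pos _ _ one_pos
  set cBr : ℝ := cB.toReal with hcBr_def
  have hcBr_pos : 0 < cBr := ENNReal.toReal_pos hcB_pos.ne' hcB_lt.ne
  have h2γpos : 0 < (2:ℝ) ^ (-γ) := Real.rpow_pos_of_pos two_pos _
  refine ⟨(2 : ℝ) ^ (-γ) * (1 - q)⁻¹ * cBr,
    mul_pos (mul_pos h2γpos (inv_pos.mpr (by linarith))) hcBr_pos, ?_⟩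
  intro R hR
  set ρ : ℕ → ℝ := fun n => R * (2 : ℝ) ^ (-(n : ℝ)) with hρ_def
  have hρ_pos : ∀ n, 0 < ρ n := fun n => mul_pos hR (Real.rpow_pos_of_pos two_pos _)
  have hρ_zero : ρ 0 = R := by simp [hρ_def]
  have hρ_anti : ∀ n, ρ (n + 1) ≤ ρ n := by
    intro n
    apply mul_le_mul_of_nonneg_left _ hR.le
    apply Real.rpow_le_rpow_of_exponent_le one_le_two
    push_cast; linarith
  -- coverage of the punctured ball by annuli
  have hcover : ball (0 : EuclideanSpace ℝ (Fin d)) R \ {0} ⊆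
      ⋃ n, (ball (0 : EuclideanSpace ℝ (Fin d)) (ρ n) \ ball 0 (ρ (n + 1))) := by
    intro x hx
    obtain ⟨hx1, hx2⟩ := hx
    rw [mem_ball, dist_zero_right] at hx1
    have hx_pos : 0 < ‖x‖ := by
      rcases eq_or_lt_of_le (norm_nonneg x) with h | h
      · exact absurd (norm_eq_zero.mp h.symm) hx2
      · exact h
    have hex : ∃ n : ℕ, ρ n ≤ ‖x‖ := by
      obtain ⟨n, hn⟩ := pow_unbounded_of_one_lt (R / ‖x‖) (one_lt_two (α := ℝ))
      refine ⟨n, ?_⟩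
      have h2n : (2:ℝ) ^ (-(n:ℝ)) = ((2:ℝ) ^ n)⁻¹ := by
        rw [Real.rpow_neg (by norm_num), Real.rpow_natCast]
      rw [hρ_def]
      dsimp only
      rw [h2n]
      rw [div_lt_iff₀ hx_pos] at hn
      have h2npos : (0:ℝ) < (2:ℝ) ^ n := by positivity
      rw [mul_inv_le_iff₀ h2npos]
      nlinarith
    classical
    set n₀ := Nat.find hex with hn₀_def
    have hn₀ : ρ n₀ ≤ ‖x‖ := Nat.find_spec hex
    have hlt : (‖x‖ < ρ (n₀ - 1) ∧ 0 < n₀) ∨ n₀ = 0 := by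
      rcases Nat.eq_zero_or_pos n₀ with h | h
      · exact Or.inr h
      · left
        refine ⟨?_, h⟩
        have h5 := Nat.find_min hex (m := n₀ - 1) (by omega)
        push_neg at h5
        simpa using h5
    rcases hlt with ⟨hlt, hn₀pos⟩ | h0
    · refine Set.mem_iUnion.mpr ⟨n₀ - 1, ?_⟩
      constructor
      · rw [mem_ball, dist_zero_right]; exact hlt
      · rw [mem_ball, dist_zero_right, not_lt]
        have hne : n₀ - 1 + 1 = n₀ := by omega
        rw [hne]
        exact hn₀
    · exfalso
      rw [h0, hρ_zero] at hn₀
      exact absurd hx1 (not_lt.mpr hn₀)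
  -- null set removal
  have hz : volume ({(0 : EuclideanSpace ℝ (Fin d))} : Set _) = 0 := measure_singleton _
  have hae : (ball (0 : EuclideanSpace ℝ (Fin d)) R \ {0} : Set _) =ᵐ[volume]
      (ball (0 : EuclideanSpace ℝ (Fin d)) R : Set _) := by
    refine Filter.eventuallyEq_set.mpr ?_
    filter_upwards [measure_eq_zero_iff_ae_notMem.mp hz] with a ha
    simp [ha]
  -- per-annulus bound
  have hann : ∀ n : ℕ,
      ∫⁻ x in (ball (0 : EuclideanSpace ℝ (Fin d)) (ρ n) \ ball 0 (ρ (n+1))),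
          ENNReal.ofReal (‖x‖ ^ γ)
        ≤ ENNReal.ofReal (ρ (n+1) ^ γ * ρ n ^ d) * cB := by
    intro n
    have hms : MeasurableSet
        (ball (0 : EuclideanSpace ℝ (Fin d)) (ρ n) \ ball 0 (ρ (n+1))) :=
      measurableSet_ball.diff measurableSet_ball
    calc ∫⁻ x in (ball (0 : EuclideanSpace ℝ (Fin d)) (ρ n) \ ball 0 (ρ (n+1))),
            ENNReal.ofReal (‖x‖ ^ γ)
        ≤ ∫⁻ _x in (ball (0 : EuclideanSpace ℝ (Fin d)) (ρ n) \ ball 0 (ρ (n+1))),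
            ENNReal.ofReal (ρ (n+1) ^ γ) := by
          apply setLIntegral_mono' hms
          intro x hx
          apply ENNReal.ofReal_le_ofReal
          apply Real.rpow_le_rpow_of_nonpos (hρ_pos (n+1)) _ hγ₂
          have := hx.2
          rw [mem_ball, dist_zero_right, not_lt] at this
          exact this
      _ = ENNReal.ofReal (ρ (n+1) ^ γ) *
            volume (ball (0 : EuclideanSpace ℝ (Fin d)) (ρ n) \ ball 0 (ρ (n+1))) :=
          setLIntegral_const _ _
      _ ≤ ENNReal.ofReal (ρ (n+1) ^ γ) * volume (ball (0 : EuclideanSpace ℝ (Fin d)) (ρ n)) :=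
          mul_le_mul_right (measure_mono Set.diff_subset) _
      _ = ENNReal.ofReal (ρ (n+1) ^ γ) * (ENNReal.ofReal (ρ n ^ d) * cB) := by
          rw [Measure.addHaar_ball _ _ (hρ_pos n).le, finrank_euclideanSpace_fin]
      _ = ENNReal.ofReal (ρ (n+1) ^ γ * ρ n ^ d) * cB := by
          rw [ENNReal.ofReal_mul (Real.rpow_nonneg (hρ_pos (n+1)).le _), mul_assoc]
  -- the term identity
  have hterm : ∀ n : ℕ, ρ (n+1) ^ γ * ρ n ^ d
      = ((2:ℝ) ^ (-γ) * R ^ ((d : ℝ) + γ)) * q ^ n := by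
    intro n
    have h2 : (0:ℝ) ≤ 2 := by norm_num
    have e0 : ρ (n + 1) = R * (2:ℝ) ^ (-((n:ℝ) + 1)) := by
      rw [hρ_def]; push_cast; ring_nf
    have e1 : ρ (n+1) ^ γ = R ^ γ * (2:ℝ) ^ ((-((n:ℝ)+1)) * γ) := by
      rw [e0, Real.mul_rpow hR.le (Real.rpow_nonneg h2 _), ← Real.rpow_mul h2]
    have e2 : ρ n ^ d = R ^ (d:ℝ) * (2:ℝ) ^ ((-(n:ℝ)) * d) := by
      rw [hρ_def]
      dsimp only
      rw [mul_pow, ← Real.rpow_natCast R d, ← Real.rpow_natCast ((2:ℝ) ^ (-(n:ℝ))) d,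
        ← Real.rpow_mul h2]
    have e3 : q ^ n = (2:ℝ) ^ (-((d:ℝ) + γ) * n) := by
      rw [hq_def, ← Real.rpow_natCast ((2:ℝ) ^ (-((d:ℝ)+γ))) n, ← Real.rpow_mul h2]
    rw [e1, e2, e3]
    rw [show R ^ γ * ((2:ℝ) ^ ((-((n:ℝ)+1)) * γ)) * (R ^ (d:ℝ) * (2:ℝ) ^ ((-(n:ℝ)) * d))
        = (R ^ γ * R ^ (d:ℝ)) * ((2:ℝ) ^ ((-((n:ℝ)+1)) * γ) * (2:ℝ) ^ ((-(n:ℝ)) * d)) by ring]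
    rw [← Real.rpow_add hR, ← Real.rpow_add two_pos]
    rw [show γ + (d:ℝ) = (d:ℝ) + γ by ring]
    rw [show (2:ℝ) ^ (-γ) * R ^ ((d:ℝ) + γ) * (2:ℝ) ^ (-((d:ℝ) + γ) * n)
        = R ^ ((d:ℝ) + γ) * ((2:ℝ) ^ (-γ) * (2:ℝ) ^ (-((d:ℝ) + γ) * n)) by ring]
    rw [← Real.rpow_add two_pos]
    rw [show (-((n:ℝ)+1)) * γ + (-(n:ℝ)) * d = -γ + -((d:ℝ) + γ) * n by ring]
  -- assembling
  calc ∫⁻ x in ball (0 : EuclideanSpace ℝ (Fin d)) R, ENNReal.ofReal (‖x‖ ^ γ)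
      = ∫⁻ x in (ball (0 : EuclideanSpace ℝ (Fin d)) R \ {0}), ENNReal.ofReal (‖x‖ ^ γ) := by
        rw [Measure.restrict_congr_set hae]
    _ ≤ ∫⁻ x in (⋃ n, (ball (0 : EuclideanSpace ℝ (Fin d)) (ρ n) \ ball 0 (ρ (n + 1)))),
          ENNReal.ofReal (‖x‖ ^ γ) := lintegral_mono_set hcover
    _ ≤ ∑' n : ℕ, ∫⁻ x in (ball (0 : EuclideanSpace ℝ (Fin d)) (ρ n) \ ball 0 (ρ (n + 1))),
          ENNReal.ofReal (‖x‖ ^ γ) := lintegral_iUnion_le _ _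
    _ ≤ ∑' n : ℕ, ENNReal.ofReal (ρ (n+1) ^ γ * ρ n ^ d) * cB :=
        ENNReal.tsum_le_tsum fun n => hann n
    _ = ∑' n : ℕ, (ENNReal.ofReal ((2:ℝ) ^ (-γ) * R ^ ((d : ℝ) + γ)) * ENNReal.ofReal q ^ n) * cB := by
        congr 1
        funext n
        rw [hterm n, ENNReal.ofReal_mul (by positivity), ENNReal.ofReal_pow hq_pos.le]
    _ = ENNReal.ofReal ((2:ℝ) ^ (-γ) * R ^ ((d : ℝ) + γ)) * (1 - ENNReal.ofReal q)⁻¹ * cB := by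
        rw [ENNReal.tsum_mul_right, ENNReal.tsum_mul_left, ENNReal.tsum_geometric]
    _ = ENNReal.ofReal (((2:ℝ) ^ (-γ) * (1 - q)⁻¹ * cBr) * R ^ ((d : ℝ) + γ)) := by
        have h1 : (1 : ℝ≥0∞) - ENNReal.ofReal q = ENNReal.ofReal (1 - q) := by
          rw [ENNReal.ofReal_sub _ hq_pos.le, ENNReal.ofReal_one]
        have h2 : cB = ENNReal.ofReal cBr := (ENNReal.ofReal_toReal hcB_lt.ne).symm
        have h3 : (0:ℝ) < 1 - q := by linarith
        rw [h1, ← ENNReal.ofReal_inv_of_pos h3, h2,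
          ← ENNReal.ofReal_mul (by positivity),
          ← ENNReal.ofReal_mul (mul_nonneg (by positivity) (inv_nonneg.mpr h3.le))]
        congr 1
        ring

/-- The cube kernel bound. -/
lemma lintegral_cube_kernel_le (hd : 3 ≤ d) {γ : ℝ} (hγ₁ : -2 < γ) (hγ₂ : γ ≤ 0) :
    ∃ K : ℝ, 0 < K ∧ ∀ (v₀ w : EuclideanSpace ℝ (Fin d)) (r : ℝ), 0 < r →
      ∫⁻ v in axisCube d v₀ r, ENNReal.ofReal (‖v - w‖ ^ γ) ≤
        ENNReal.ofReal (K * r ^ d * max r ‖v₀ - w‖ ^ γ) := by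
  haveI : NeZero d := ⟨by omega⟩
  obtain ⟨K₁, hK₁_pos, hK₁⟩ := lintegral_ball_rpow_le hd hγ₁ hγ₂
  set cB : ℝ≥0∞ := volume (ball (0 : EuclideanSpace ℝ (Fin d)) 1) with hcB_def
  have hcB_lt : cB < ⊤ := measure_ball_lt_top
  have hcB_pos : 0 < cB := measure_ball_pos _ _ one_pos
  set cBr : ℝ := cB.toReal with hcBr_def
  have hcBr_pos : 0 < cBr := ENNReal.toReal_pos hcB_pos.ne' hcB_lt.ne
  set s : ℝ := Real.sqrt d with hs_def
  have hs_pos : 0 < s := Real.sqrt_pos.mpr (by positivity)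
  have hs_one : 1 ≤ s := by
    rw [hs_def, show (1:ℝ) = Real.sqrt 1 by simp]
    apply Real.sqrt_le_sqrt
    have : (3:ℝ) ≤ d := by exact_mod_cast hd
    linarith
  have hc1_pos : 0 < (2*s) ^ ((d:ℝ)+γ) * s ^ (-γ) :=
    mul_pos (Real.rpow_pos_of_pos (by linarith) _) (Real.rpow_pos_of_pos hs_pos _)
  have hc2_pos : 0 < (2:ℝ) ^ (-γ) * (s/2) ^ d * cBr := by
    have := Real.rpow_pos_of_pos (two_pos (α := ℝ)) (-γ)
    positivity
  refine ⟨K₁ * ((2*s) ^ ((d:ℝ)+γ) * s ^ (-γ)) + (2:ℝ) ^ (-γ) * (s/2) ^ d * cBr,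
    by positivity, ?_⟩
  intro v₀ w r hr
  set M : ℝ := max r ‖v₀ - w‖ with hM_def
  have hM_pos : 0 < M := lt_of_lt_of_le hr (le_max_left _ _)
  have hMγ_pos : 0 < M ^ γ := Real.rpow_pos_of_pos hM_pos _
  have hrd_pos : 0 < (r:ℝ) ^ d := by positivity
  by_cases hcase : ‖v₀ - w‖ ≤ s * r
  · -- near case: cube inside ball around w
    have hsr_pos : 0 < s * r := mul_pos hs_pos hr
    have hsub : axisCube d v₀ r ⊆ ball w (2 * s * r) := by
      intro v hv
      have h1 : v ∈ closedBall v₀ (s * r / 2) := axisCube_subset_closedBall v₀ hr.le hv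
      rw [mem_closedBall, dist_eq_norm] at h1
      rw [mem_ball, dist_eq_norm]
      calc ‖v - w‖ = ‖(v - v₀) + (v₀ - w)‖ := by rw [sub_add_sub_cancel]
        _ ≤ ‖v - v₀‖ + ‖v₀ - w‖ := norm_add_le _ _
        _ ≤ s * r / 2 + s * r := add_le_add h1 hcase
        _ < 2 * s * r := by linarith
    have hMle : M ≤ s * r := by
      apply max_le _ hcase
      nlinarith
    have hrγ_le : r ^ γ ≤ s ^ (-γ) * M ^ γ := by
      have h1 : (s * r) ^ γ ≤ M ^ γ := Real.rpow_le_rpow_of_nonpos hM_pos hMle hγ₂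
      have h2 : (s * r) ^ γ = s ^ γ * r ^ γ := Real.mul_rpow hs_pos.le hr.le
      have h3 : 0 < s ^ γ := Real.rpow_pos_of_pos hs_pos _
      have h4 : s ^ (-γ) * s ^ γ = 1 := by
        rw [← Real.rpow_add hs_pos]; simp
      have h5 : 0 < s ^ (-γ) := Real.rpow_pos_of_pos hs_pos _
      calc r ^ γ = s ^ (-γ) * (s ^ γ * r ^ γ) := by
            rw [← mul_assoc, h4, one_mul]
        _ ≤ s ^ (-γ) * M ^ γ := by
            rw [← h2]
            exact mul_le_mul_of_nonneg_left h1 h5.le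
    calc ∫⁻ v in axisCube d v₀ r, ENNReal.ofReal (‖v - w‖ ^ γ)
        ≤ ∫⁻ v in ball w (2 * s * r), ENNReal.ofReal (‖v - w‖ ^ γ) :=
          lintegral_mono_set hsub
      _ = ∫⁻ x in ball (0 : EuclideanSpace ℝ (Fin d)) (2 * s * r), ENNReal.ofReal (‖x‖ ^ γ) :=
          lintegral_ball_translate w γ _
      _ ≤ ENNReal.ofReal (K₁ * (2 * s * r) ^ ((d:ℝ) + γ)) := hK₁ _ (by linarith)
      _ ≤ ENNReal.ofReal ((K₁ * ((2*s) ^ ((d:ℝ)+γ) * s ^ (-γ)) + (2:ℝ) ^ (-γ) * (s/2) ^ d * cBr)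
            * r ^ d * M ^ γ) := by
          apply ENNReal.ofReal_le_ofReal
          have e1 : (2 * s * r) ^ ((d:ℝ) + γ) = (2*s) ^ ((d:ℝ)+γ) * (r ^ (d:ℝ) * r ^ γ) := by
            rw [Real.mul_rpow (by linarith) hr.le, ← Real.rpow_add hr]
          rw [e1]
          have e2 : r ^ (d:ℝ) = r ^ d := Real.rpow_natCast r d
          rw [e2]
          have h6 : 0 < (2*s) ^ ((d:ℝ)+γ) := Real.rpow_pos_of_pos (by linarith) _
          have h7 : K₁ * ((2*s) ^ ((d:ℝ)+γ) * (r ^ d * r ^ γ))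
              ≤ K₁ * ((2*s) ^ ((d:ℝ)+γ) * (r ^ d * (s ^ (-γ) * M ^ γ))) := by
            apply mul_le_mul_of_nonneg_left _ hK₁_pos.le
            apply mul_le_mul_of_nonneg_left _ h6.le
            exact mul_le_mul_of_nonneg_left hrγ_le hrd_pos.le
          nlinarith [mul_pos (mul_pos hc2_pos hrd_pos) hMγ_pos]
  · -- far case
    push_neg at hcase
    have hsrM : s * r ≤ M := le_trans hcase.le (le_max_right _ _)
    have hM_eq : M = ‖v₀ - w‖ := max_eq_right (by nlinarith)
    have hpt : ∀ v ∈ axisCube d v₀ r, ENNReal.ofReal (‖v - w‖ ^ γ)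
        ≤ ENNReal.ofReal ((M / 2) ^ γ) := by
      intro v hv
      apply ENNReal.ofReal_le_ofReal
      apply Real.rpow_le_rpow_of_nonpos (by linarith) _ hγ₂
      have h1 : v ∈ closedBall v₀ (s * r / 2) := axisCube_subset_closedBall v₀ hr.le hv
      rw [mem_closedBall, dist_eq_norm] at h1
      have h2 : ‖v₀ - w‖ - ‖v - v₀‖ ≤ ‖v - w‖ := by
        have h3 : ‖v₀ - w‖ ≤ ‖v₀ - v‖ + ‖v - w‖ := by
          calc ‖v₀ - w‖ = ‖(v₀ - v) + (v - w)‖ := by rw [sub_add_sub_cancel]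
            _ ≤ ‖v₀ - v‖ + ‖v - w‖ := norm_add_le _ _
        rw [norm_sub_rev v₀ v] at h3
        linarith
      rw [← hM_eq] at h2
      linarith
    calc ∫⁻ v in axisCube d v₀ r, ENNReal.ofReal (‖v - w‖ ^ γ)
        ≤ ∫⁻ _v in axisCube d v₀ r, ENNReal.ofReal ((M / 2) ^ γ) :=
          setLIntegral_mono' (measurableSet_axisCube v₀ r) hpt
      _ = ENNReal.ofReal ((M / 2) ^ γ) * volume (axisCube d v₀ r) := setLIntegral_const _ _
      _ ≤ ENNReal.ofReal ((M / 2) ^ γ) * volume (closedBall v₀ (s * r / 2)) :=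
          mul_le_mul_right (measure_mono (axisCube_subset_closedBall v₀ hr.le)) _
      _ = ENNReal.ofReal ((M / 2) ^ γ) * (ENNReal.ofReal ((s * r / 2) ^ d) * cB) := by
          rw [Measure.addHaar_closedBall _ _ (by positivity), finrank_euclideanSpace_fin]
      _ ≤ ENNReal.ofReal ((K₁ * ((2*s) ^ ((d:ℝ)+γ) * s ^ (-γ)) + (2:ℝ) ^ (-γ) * (s/2) ^ d * cBr)
            * r ^ d * M ^ γ) := by
          rw [← ENNReal.ofReal_toReal hcB_lt.ne, ← hcBr_def,
            ← ENNReal.ofReal_mul (by positivity), ← ENNReal.ofReal_mul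
              (Real.rpow_nonneg (by positivity) _)]
          apply ENNReal.ofReal_le_ofReal
          have e1 : (M / 2) ^ γ = M ^ γ * (2:ℝ) ^ (-γ) := by
            rw [Real.div_rpow hM_pos.le (by norm_num), Real.rpow_neg (by norm_num)]
            ring
          have e2 : (s * r / 2) ^ d = (s / 2) ^ d * r ^ d := by
            rw [← mul_pow]; ring_nf
          rw [e1, e2]
          have h8 : 0 ≤ K₁ * ((2*s) ^ ((d:ℝ)+γ) * s ^ (-γ)) * r ^ d * M ^ γ := by positivity
          nlinarith

set_option maxHeartbeats 2000000 in
/-- For `d ≥ 3`, `γ ∈ (-2,0]` and `f ≥ 0` with unit mass and second moment `d`, the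
reaction coefficient `h_{f,γ} = f * ‖v‖^γ` satisfies, on every cube `Q` of side `r ≤ 1`
centered at `v₀`, the average bound `⨍_Q h_{f,γ} ≤ C ⟨v₀⟩^γ r^γ` with `C = C(d,γ)`. -/
theorem landau_h_cube_average_bound (d : ℕ) (hd : 3 ≤ d) (γ : ℝ)
    (hγ₁ : -2 < γ) (hγ₂ : γ ≤ 0) :
    ∃ C : ℝ, 0 < C ∧
      ∀ f : EuclideanSpace ℝ (Fin d) → ℝ,
        (∀ v, 0 ≤ f v) → Integrable f → (∫ v, f v) = 1 →
        Integrable (fun v => f v * ‖v‖ ^ 2) → (∫ v, f v * ‖v‖ ^ 2) = d →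
        ∀ (v₀ : EuclideanSpace ℝ (Fin d)) (r : ℝ), 0 < r → r ≤ 1 →
          (⨍ v in axisCube d v₀ r, ∫ w, f w * ‖v - w‖ ^ γ) ≤
            C * (1 + ‖v₀‖ ^ 2) ^ (γ / 2) * r ^ γ := by
  classical
  haveI : NeZero d := ⟨by omega⟩
  obtain ⟨K₁, hK₁_pos, hK₁⟩ := lintegral_cube_kernel_le hd hγ₁ hγ₂
  set cB : ℝ≥0∞ := volume (ball (0 : EuclideanSpace ℝ (Fin d)) 1) with hcB_def
  have hcB_lt : cB < ⊤ := measure_ball_lt_top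
  have hcB_pos : 0 < cB := measure_ball_pos _ _ one_pos
  set cBr : ℝ := cB.toReal with hcBr_def
  have hcBr_pos : 0 < cBr := ENNReal.toReal_pos hcB_pos.ne' hcB_lt.ne
  have h3γ_pos : 0 < (3:ℝ) ^ (-γ) := Real.rpow_pos_of_pos (by norm_num) _
  set c₂ : ℝ := 8 * d + (3:ℝ) ^ (-γ) + 2 with hc₂_def
  have hc₂_pos : 0 < c₂ := by positivity
  refine ⟨2 ^ d * K₁ * c₂ / cBr, by positivity, ?_⟩
  intro f hf hfint hfmass hf2int hf2mom v₀ r hr hr1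
  set Q : Set (EuclideanSpace ℝ (Fin d)) := axisCube d v₀ r with hQ_def
  set gv : ℝ := (1 + ‖v₀‖ ^ 2) ^ (γ / 2) with hgv_def
  have hbase_pos : (0:ℝ) < 1 + ‖v₀‖ ^ 2 := by positivity
  have hgv_pos : 0 < gv := Real.rpow_pos_of_pos hbase_pos _
  -- volume facts
  have hQfin : volume Q ≠ ⊤ :=
    ((measure_mono (axisCube_subset_closedBall v₀ hr.le)).trans_lt
      measure_closedBall_lt_top).ne
  have hQlow : (r/2) ^ d * cBr ≤ (volume Q).toReal := by
    have h1 : volume (closedBall v₀ (r/2)) ≤ volume Q :=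
      measure_mono (closedBall_subset_axisCube v₀)
    have h2 : volume (closedBall v₀ (r/2)) = ENNReal.ofReal ((r/2) ^ d) * cB := by
      rw [Measure.addHaar_closedBall _ _ (by positivity), finrank_euclideanSpace_fin]
    have h3 := ENNReal.toReal_mono hQfin h1
    rw [h2, ENNReal.toReal_mul, ENNReal.toReal_ofReal (by positivity)] at h3
    exact h3
  have hvQt_pos : 0 < (volume Q).toReal := lt_of_lt_of_le (by positivity) hQlow
  -- measurability
  have hrpow : Measurable fun x : ℝ => x ^ γ := by measurability
  have hker : Measurable fun p : EuclideanSpace ℝ (Fin d) × EuclideanSpace ℝ (Fin d) =>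
      ‖p.1 - p.2‖ ^ γ := hrpow.comp (measurable_fst.sub measurable_snd).norm
  have hφm : AEStronglyMeasurable
      (fun p : EuclideanSpace ℝ (Fin d) × EuclideanSpace ℝ (Fin d) =>
        f p.2 * ‖p.1 - p.2‖ ^ γ) ((volume.restrict Q).prod volume) :=
    hfint.aestronglyMeasurable.comp_snd.mul hker.aestronglyMeasurable
  set H : EuclideanSpace ℝ (Fin d) → ℝ := fun v => ∫ w, f w * ‖v - w‖ ^ γ with hH_def
  have hH_nonneg : ∀ v, 0 ≤ H v := fun v =>
    integral_nonneg fun w => mul_nonneg (hf w) (Real.rpow_nonneg (norm_nonneg _) _)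
  have hHm : AEStronglyMeasurable H (volume.restrict Q) := hφm.integral_prod_right'
  -- Step: Bochner integral to lintegral
  have hstep0 : ∫ v in Q, H v = (∫⁻ v in Q, ENNReal.ofReal (H v)).toReal :=
    integral_eq_lintegral_of_nonneg_ae (Filter.Eventually.of_forall hH_nonneg) hHm
  -- Step: pointwise lintegral domination
  have hstep1 : ∫⁻ v in Q, ENNReal.ofReal (H v)
      ≤ ∫⁻ v in Q, ∫⁻ w, ENNReal.ofReal (f w * ‖v - w‖ ^ γ) := by
    apply lintegral_mono
    intro v
    show ENNReal.ofReal (H v) ≤ ∫⁻ w, ENNReal.ofReal (f w * ‖v - w‖ ^ γ)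
    by_cases hiv : Integrable (fun w => f w * ‖v - w‖ ^ γ)
    · exact le_of_eq (ofReal_integral_eq_lintegral_ofReal hiv
        (Filter.Eventually.of_forall fun w => mul_nonneg (hf w)
          (Real.rpow_nonneg (norm_nonneg _) _)))
    · have h0 : H v = 0 := integral_undef hiv
      rw [h0]
      simp
  -- Tonelli
  have hswap : ∫⁻ v in Q, ∫⁻ w, ENNReal.ofReal (f w * ‖v - w‖ ^ γ)
      = ∫⁻ w, ∫⁻ v in Q, ENNReal.ofReal (f w * ‖v - w‖ ^ γ) := by
    apply lintegral_lintegral_swap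
    exact (hfint.aemeasurable.comp_snd.mul hker.aemeasurable).ennreal_ofReal
  -- kernel bound
  have hstep3 : ∀ w, ∫⁻ v in Q, ENNReal.ofReal (f w * ‖v - w‖ ^ γ)
      ≤ ENNReal.ofReal (f w) *
          (ENNReal.ofReal (K₁ * r ^ d) * ENNReal.ofReal (max r ‖v₀ - w‖ ^ γ)) := by
    intro w
    have e1 : ∫⁻ v in Q, ENNReal.ofReal (f w * ‖v - w‖ ^ γ)
        = ENNReal.ofReal (f w) * ∫⁻ v in Q, ENNReal.ofReal (‖v - w‖ ^ γ) := by
      simp_rw [ENNReal.ofReal_mul (hf w)]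
      exact lintegral_const_mul' _ _ ENNReal.ofReal_ne_top
    rw [e1]
    apply mul_le_mul_right
    calc ∫⁻ v in Q, ENNReal.ofReal (‖v - w‖ ^ γ)
        ≤ ENNReal.ofReal (K₁ * r ^ d * max r ‖v₀ - w‖ ^ γ) := hK₁ v₀ w r hr
      _ = ENNReal.ofReal (K₁ * r ^ d) * ENNReal.ofReal (max r ‖v₀ - w‖ ^ γ) :=
          ENNReal.ofReal_mul (by positivity)
  -- the moment bound
  have hI1 : ∫⁻ w, ENNReal.ofReal (f w) = 1 := by
    rw [← ofReal_integral_eq_lintegral_ofReal hfint (Filter.Eventually.of_forall hf),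
      hfmass, ENNReal.ofReal_one]
  have hI2 : ∫⁻ w, ENNReal.ofReal (f w * ‖w‖ ^ 2) = ENNReal.ofReal d := by
    rw [← ofReal_integral_eq_lintegral_ofReal hf2int
      (Filter.Eventually.of_forall fun w => mul_nonneg (hf w) (by positivity)), hf2mom]
  have hrγ_pos : 0 < r ^ γ := Real.rpow_pos_of_pos hr _
  have hm_le : ∀ w : EuclideanSpace ℝ (Fin d), max r ‖v₀ - w‖ ^ γ ≤ r ^ γ := fun w =>
    Real.rpow_le_rpow_of_nonpos hr (le_max_left _ _) hγ₂
  have hm_nonneg : ∀ w : EuclideanSpace ℝ (Fin d), 0 ≤ max r ‖v₀ - w‖ ^ γ := fun w =>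
    Real.rpow_nonneg (le_trans hr.le (le_max_left _ _)) _
  set T : ℝ≥0∞ := ∫⁻ w, ENNReal.ofReal (f w) * ENNReal.ofReal (max r ‖v₀ - w‖ ^ γ) with hT_def
  have hT_le : T ≤ ENNReal.ofReal (c₂ * gv * r ^ γ) := by
    by_cases hv₀ : ‖v₀‖ ≤ 1
    · -- small center
      have hgv_half : (1:ℝ)/2 ≤ gv := by
        have h1 : (2:ℝ) ^ (γ/2) ≤ gv := by
          apply Real.rpow_le_rpow_of_nonpos hbase_pos _ (by linarith)
          nlinarith [norm_nonneg v₀, hv₀]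
        have h2 : (2:ℝ) ^ (-1:ℝ) ≤ (2:ℝ) ^ (γ/2) :=
          Real.rpow_le_rpow_of_exponent_le one_le_two (by linarith)
        rw [Real.rpow_neg_one] at h2
        norm_num at h2
        linarith
      calc T ≤ ∫⁻ w, ENNReal.ofReal (f w) * ENNReal.ofReal (r ^ γ) := by
            apply lintegral_mono
            intro w
            exact mul_le_mul_right (ENNReal.ofReal_le_ofReal (hm_le w)) _
        _ = ENNReal.ofReal (r ^ γ) := by
            rw [lintegral_mul_const' _ _ ENNReal.ofReal_ne_top, hI1, one_mul]
        _ ≤ ENNReal.ofReal (c₂ * gv * r ^ γ) := by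
            apply ENNReal.ofReal_le_ofReal
            have hc2ge : (2:ℝ) ≤ c₂ := by
              have hd0 : (0:ℝ) ≤ 8 * d := by positivity
              rw [hc₂_def]; linarith
            have hx1 : (1/2 : ℝ) * r ^ γ ≤ gv * r ^ γ :=
              mul_le_mul_of_nonneg_right hgv_half hrγ_pos.le
            have hx2 : (2:ℝ) * (gv * r ^ γ) ≤ c₂ * (gv * r ^ γ) :=
              mul_le_mul_of_nonneg_right hc2ge (mul_nonneg hgv_pos.le hrγ_pos.le)
            nlinarith
    · -- large center
      push_neg at hv₀
      set S : Set (EuclideanSpace ℝ (Fin d)) := ball v₀ (‖v₀‖ / 2) with hS_def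
      have hsplit : T = (∫⁻ w in S, ENNReal.ofReal (f w) * ENNReal.ofReal (max r ‖v₀ - w‖ ^ γ))
          + ∫⁻ w in Sᶜ, ENNReal.ofReal (f w) * ENNReal.ofReal (max r ‖v₀ - w‖ ^ γ) :=
        (lintegral_add_compl _ measurableSet_ball).symm
      have hinv_le : (1 + ‖v₀‖ ^ 2)⁻¹ ≤ gv := by
        rw [← Real.rpow_neg_one (1 + ‖v₀‖ ^ 2)]
        exact Real.rpow_le_rpow_of_exponent_le (by nlinarith) (by linarith)
      have hpart1 : ∫⁻ w in S, ENNReal.ofReal (f w) * ENNReal.ofReal (max r ‖v₀ - w‖ ^ γ)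
          ≤ ENNReal.ofReal ((8 * d) * gv * r ^ γ) := by
        have hpw : ∀ w ∈ S, ENNReal.ofReal (f w) * ENNReal.ofReal (max r ‖v₀ - w‖ ^ γ)
            ≤ ENNReal.ofReal (4 / ‖v₀‖ ^ 2 * r ^ γ) * ENNReal.ofReal (f w * ‖w‖ ^ 2) := by
          intro w hw
          rw [← ENNReal.ofReal_mul (hf w), ← ENNReal.ofReal_mul (by positivity)]
          apply ENNReal.ofReal_le_ofReal
          have hw1 : ‖v₀ - w‖ < ‖v₀‖ / 2 := by
            rw [hS_def, mem_ball, dist_eq_norm] at hw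
            rw [norm_sub_rev]
            exact hw
          have hw2 : ‖v₀‖ / 2 ≤ ‖w‖ := by
            have := norm_sub_norm_le v₀ w
            linarith
          have hv₀pos : (0:ℝ) < ‖v₀‖ := by linarith
          have hkey : 1 ≤ ‖w‖ ^ 2 * (4 / ‖v₀‖ ^ 2) := by
            have h5 : (0:ℝ) < ‖v₀‖ ^ 2 := by positivity
            rw [mul_div, le_div_iff₀ h5, one_mul]
            nlinarith
          calc f w * max r ‖v₀ - w‖ ^ γ ≤ f w * r ^ γ :=
                mul_le_mul_of_nonneg_left (hm_le w) (hf w)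
            _ ≤ (f w * (‖w‖ ^ 2 * (4 / ‖v₀‖ ^ 2))) * r ^ γ := by
                apply mul_le_mul_of_nonneg_right _ hrγ_pos.le
                nlinarith [hf w]
            _ = 4 / ‖v₀‖ ^ 2 * r ^ γ * (f w * ‖w‖ ^ 2) := by ring
        calc ∫⁻ w in S, ENNReal.ofReal (f w) * ENNReal.ofReal (max r ‖v₀ - w‖ ^ γ)
            ≤ ∫⁻ w in S, ENNReal.ofReal (4 / ‖v₀‖ ^ 2 * r ^ γ) * ENNReal.ofReal (f w * ‖w‖ ^ 2) :=
              setLIntegral_mono' measurableSet_ball hpw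
          _ = ENNReal.ofReal (4 / ‖v₀‖ ^ 2 * r ^ γ) *
                ∫⁻ w in S, ENNReal.ofReal (f w * ‖w‖ ^ 2) :=
              lintegral_const_mul' _ _ ENNReal.ofReal_ne_top
          _ ≤ ENNReal.ofReal (4 / ‖v₀‖ ^ 2 * r ^ γ) * ∫⁻ w, ENNReal.ofReal (f w * ‖w‖ ^ 2) :=
              mul_le_mul_right (setLIntegral_le_lintegral _ _) _
          _ = ENNReal.ofReal (4 / ‖v₀‖ ^ 2 * r ^ γ) * ENNReal.ofReal d := by rw [hI2]
          _ = ENNReal.ofReal (4 / ‖v₀‖ ^ 2 * r ^ γ * d) := by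
              rw [← ENNReal.ofReal_mul (by positivity)]
          _ ≤ ENNReal.ofReal ((8 * d) * gv * r ^ γ) := by
              apply ENNReal.ofReal_le_ofReal
              have h6 : 1 / ‖v₀‖ ^ 2 ≤ 2 * (1 + ‖v₀‖ ^ 2)⁻¹ := by
                have h5 : (0:ℝ) < ‖v₀‖ ^ 2 := by positivity
                have he : 2 * (1 + ‖v₀‖ ^ 2)⁻¹ = 2 / (1 + ‖v₀‖ ^ 2) := by
                  rw [inv_eq_one_div]; ring
                rw [he, div_le_div_iff₀ h5 hbase_pos]
                nlinarith
              have h7 : 4 / ‖v₀‖ ^ 2 ≤ 8 * gv := by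
                have : 4 / ‖v₀‖ ^ 2 = 4 * (1 / ‖v₀‖ ^ 2) := by ring
                rw [this]
                calc (4:ℝ) * (1 / ‖v₀‖ ^ 2) ≤ 4 * (2 * (1 + ‖v₀‖ ^ 2)⁻¹) := by linarith
                  _ ≤ 8 * gv := by nlinarith
              have hd0 : (0:ℝ) ≤ d := Nat.cast_nonneg d
              nlinarith [mul_le_mul_of_nonneg_right h7 hrγ_pos.le, hgv_pos]
      have hpart2 : ∫⁻ w in Sᶜ, ENNReal.ofReal (f w) * ENNReal.ofReal (max r ‖v₀ - w‖ ^ γ)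
          ≤ ENNReal.ofReal ((3:ℝ) ^ (-γ) * gv * r ^ γ) := by
        have hpw : ∀ w ∈ Sᶜ, ENNReal.ofReal (f w) * ENNReal.ofReal (max r ‖v₀ - w‖ ^ γ)
            ≤ ENNReal.ofReal (f w) * ENNReal.ofReal ((3:ℝ) ^ (-γ) * gv * r ^ γ) := by
          intro w hw
          apply mul_le_mul_right
          apply ENNReal.ofReal_le_ofReal
          have hw1 : ‖v₀‖ / 2 ≤ ‖v₀ - w‖ := by
            rw [hS_def, Set.mem_compl_iff, mem_ball, dist_eq_norm, not_lt] at hw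
            rw [norm_sub_rev]
            exact hw
          set M : ℝ := max r ‖v₀ - w‖ with hM_def2
          have hrM : r ≤ M := le_max_left _ _
          have hwM : ‖v₀ - w‖ ≤ M := le_max_right _ _
          have hM_pos : 0 < M := lt_of_lt_of_le hr hrM
          have hsqrt_le : Real.sqrt (1 + ‖v₀‖ ^ 2) ≤ 1 + ‖v₀‖ := by
            rw [show (1:ℝ) + ‖v₀‖ = Real.sqrt ((1 + ‖v₀‖) ^ 2) from
              (Real.sqrt_sq (by positivity)).symm]
            apply Real.sqrt_le_sqrt
            nlinarith [norm_nonneg v₀]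
          have hkey : r * Real.sqrt (1 + ‖v₀‖ ^ 2) ≤ 3 * M := by
            have h1 : r * Real.sqrt (1 + ‖v₀‖ ^ 2) ≤ r * (1 + ‖v₀‖) :=
              mul_le_mul_of_nonneg_left hsqrt_le hr.le
            have h2 : r * ‖v₀‖ ≤ ‖v₀‖ := by
              nlinarith [norm_nonneg v₀]
            have h3 : ‖v₀‖ ≤ 2 * M := by linarith
            nlinarith
          have hq_pos : 0 < r * Real.sqrt (1 + ‖v₀‖ ^ 2) / 3 := by
            have := Real.sqrt_pos.mpr hbase_pos
            positivity
          have h4 : M ^ γ ≤ (r * Real.sqrt (1 + ‖v₀‖ ^ 2) / 3) ^ γ :=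
            Real.rpow_le_rpow_of_nonpos hq_pos (by linarith) hγ₂
          have h5 : (r * Real.sqrt (1 + ‖v₀‖ ^ 2) / 3) ^ γ = (3:ℝ) ^ (-γ) * gv * r ^ γ := by
            rw [Real.div_rpow (by positivity) (by norm_num),
              Real.mul_rpow hr.le (Real.sqrt_nonneg _),
              Real.rpow_neg (by norm_num : (0:ℝ) ≤ 3)]
            have h6 : Real.sqrt (1 + ‖v₀‖ ^ 2) ^ γ = gv := by
              rw [Real.sqrt_eq_rpow, ← Real.rpow_mul hbase_pos.le]
              rw [show 1/2 * γ = γ/2 by ring]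
            rw [h6]
            field_simp
          rw [h5] at h4
          exact h4
        calc ∫⁻ w in Sᶜ, ENNReal.ofReal (f w) * ENNReal.ofReal (max r ‖v₀ - w‖ ^ γ)
            ≤ ∫⁻ w in Sᶜ, ENNReal.ofReal (f w) * ENNReal.ofReal ((3:ℝ) ^ (-γ) * gv * r ^ γ) :=
              setLIntegral_mono' measurableSet_ball.compl hpw
          _ = (∫⁻ w in Sᶜ, ENNReal.ofReal (f w)) * ENNReal.ofReal ((3:ℝ) ^ (-γ) * gv * r ^ γ) :=
              lintegral_mul_const' _ _ ENNReal.ofReal_ne_top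
          _ ≤ (∫⁻ w, ENNReal.ofReal (f w)) * ENNReal.ofReal ((3:ℝ) ^ (-γ) * gv * r ^ γ) :=
              mul_le_mul_left (setLIntegral_le_lintegral _ _) _
          _ = ENNReal.ofReal ((3:ℝ) ^ (-γ) * gv * r ^ γ) := by rw [hI1, one_mul]
      calc T = _ + _ := hsplit
        _ ≤ ENNReal.ofReal ((8 * d) * gv * r ^ γ) + ENNReal.ofReal ((3:ℝ) ^ (-γ) * gv * r ^ γ) :=
            add_le_add hpart1 hpart2
        _ = ENNReal.ofReal ((8 * d) * gv * r ^ γ + (3:ℝ) ^ (-γ) * gv * r ^ γ) :=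
            (ENNReal.ofReal_add (by positivity) (by positivity)).symm
        _ ≤ ENNReal.ofReal (c₂ * gv * r ^ γ) := by
            apply ENNReal.ofReal_le_ofReal
            rw [hc₂_def]
            nlinarith [hgv_pos, hrγ_pos]
  -- combine the lintegral bound
  have hfinal_lin : ∫⁻ v in Q, ENNReal.ofReal (H v)
      ≤ ENNReal.ofReal ((K₁ * r ^ d) * (c₂ * gv * r ^ γ)) := by
    calc ∫⁻ v in Q, ENNReal.ofReal (H v)
        ≤ ∫⁻ v in Q, ∫⁻ w, ENNReal.ofReal (f w * ‖v - w‖ ^ γ) := hstep1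
      _ = ∫⁻ w, ∫⁻ v in Q, ENNReal.ofReal (f w * ‖v - w‖ ^ γ) := hswap
      _ ≤ ∫⁻ w, ENNReal.ofReal (f w) *
            (ENNReal.ofReal (K₁ * r ^ d) * ENNReal.ofReal (max r ‖v₀ - w‖ ^ γ)) :=
          lintegral_mono fun w => hstep3 w
      _ = ENNReal.ofReal (K₁ * r ^ d) * T := by
          rw [hT_def, ← lintegral_const_mul' _ _ ENNReal.ofReal_ne_top]
          congr 1
          funext w
          ring
      _ ≤ ENNReal.ofReal (K₁ * r ^ d) * ENNReal.ofReal (c₂ * gv * r ^ γ) :=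
          mul_le_mul_right hT_le _
      _ = ENNReal.ofReal ((K₁ * r ^ d) * (c₂ * gv * r ^ γ)) :=
          (ENNReal.ofReal_mul (by positivity)).symm
  have hint_le : ∫ v in Q, H v ≤ (K₁ * r ^ d) * (c₂ * gv * r ^ γ) := by
    rw [hstep0]
    exact ENNReal.toReal_le_of_le_ofReal (by positivity) hfinal_lin
  -- assemble the average
  have havg : (⨍ v in axisCube d v₀ r, ∫ w, f w * ‖v - w‖ ^ γ)
      = (volume Q).toReal⁻¹ * ∫ v in Q, H v := by
    have hse := setAverage_eq (μ := volume) H Q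
    rw [smul_eq_mul] at hse
    exact hse
  rw [havg]
  have h1 : (volume Q).toReal⁻¹ * ∫ v in Q, H v
      ≤ (volume Q).toReal⁻¹ * ((K₁ * r ^ d) * (c₂ * gv * r ^ γ)) :=
    mul_le_mul_of_nonneg_left hint_le (by positivity)
  have h2 : (volume Q).toReal⁻¹ ≤ ((r/2) ^ d * cBr)⁻¹ := by
    apply inv_anti₀ (by positivity) hQlow
  have h3 : (volume Q).toReal⁻¹ * ((K₁ * r ^ d) * (c₂ * gv * r ^ γ))
      ≤ ((r/2) ^ d * cBr)⁻¹ * ((K₁ * r ^ d) * (c₂ * gv * r ^ γ)) :=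
    mul_le_mul_of_nonneg_right h2 (by positivity)
  have h4 : ((r/2) ^ d * cBr)⁻¹ * ((K₁ * r ^ d) * (c₂ * gv * r ^ γ))
      = (2 ^ d * K₁ * c₂ / cBr) * gv * r ^ γ := by
    have hr0 : r ≠ 0 := hr.ne'
    have hcBr0 : cBr ≠ 0 := hcBr_pos.ne'
    rw [div_pow]
    field_simp
  calc (volume Q).toReal⁻¹ * ∫ v in Q, H v
      ≤ ((r/2) ^ d * cBr)⁻¹ * ((K₁ * r ^ d) * (c₂ * gv * r ^ γ)) := le_trans h1 h3
    _ = (2 ^ d * K₁ * c₂ / cBr) * gv * r ^ γ := h4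

end Aux
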